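/- Let n ≥ 2, let s : Fin n → ℝ be injective, let ỹ : Fin n → ℝ be a bijection onto {1, 2, …, n}, let σ > 0, and define r̂_i = 1 + #{j ≠ i : s_i < s_j} and ρ = 12·(Σ_{i=1}^{n} r̂_i ỹ_i − n·((n+1)/2)²)/(n(n² − 1)). Then 1 − ρ ≤ (12 / (n(n² − 1))) · Σ_{(i,j) : ỹ_i < ỹ_j} |r̂_j − r̂_i| · (ỹ_j − ỹ_i) · log₂(1 + exp(−σ(s_i − s_j))), where the sum is over all ordered pairs (i, j) with ỹ_i < ỹ_j. -/

import Mathlib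

open Finset

private lemma sumsq_aux (n : ℕ) :
    ∑ k ∈ range n, ((k : ℝ) + 1) ^ 2 = (n : ℝ) * (n + 1) * (2 * n + 1) / 6 := by
  induction n with
  | zero => simp
  | succ m ih => rw [Finset.sum_range_succ, ih]; push_cast; ring

private lemma perm_count_aux (n : ℕ) (f : Equiv.Perm (Fin n)) (i : Fin n) :
    (univ.filter fun j => f j ≤ f i).card = (f i : ℕ) + 1 := by
  have h1 : (univ.filter fun j => f j ≤ f i) = (Iic (f i)).map f.symm.toEmbedding := by
    ext j
    simp only [mem_filter, mem_univ, true_and, Finset.mem_map_equiv, Equiv.symm_symm,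
      Finset.mem_Iic]
  rw [h1, Finset.card_map, Fin.card_Iic]

/-- The key combinatorial identity: for two permutations `τ, σ` of `Fin n`,
the sum of squared rank differences equals the sum over "inversion" pairs of
the sums of the rank gaps. -/
private lemma perm_ident_aux (n : ℕ) (τ σ' : Equiv.Perm (Fin n)) :
    ∑ i, (((τ i : ℕ) : ℝ) - ((σ' i : ℕ) : ℝ)) ^ 2
      = ∑ i, ∑ j, (if τ j < τ i ∧ σ' i < σ' j then
          ((((τ i : ℕ) : ℝ) - ((σ' i : ℕ) : ℝ)) - (((τ j : ℕ) : ℝ) - ((σ' j : ℕ) : ℝ)))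
          else 0) := by
  set u : Fin n → ℝ := fun i => ((τ i : ℕ) : ℝ) - ((σ' i : ℕ) : ℝ) with hu_def
  have hcount : ∀ (f : Equiv.Perm (Fin n)) (i : Fin n),
      ((f i : ℕ) : ℝ) + 1 = ∑ j, (if f j ≤ f i then (1 : ℝ) else 0) := by
    intro f i
    rw [Finset.sum_boole, perm_count_aux]
    push_cast
    ring
  have hu : ∀ i, u i = ∑ j,
      ((if τ j ≤ τ i ∧ σ' i < σ' j then (1 : ℝ) else 0)
        - (if σ' j ≤ σ' i ∧ τ i < τ j then (1 : ℝ) else 0)) := by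
    intro i
    have h1 : u i = (∑ j, (if τ j ≤ τ i then (1 : ℝ) else 0))
        - (∑ j, (if σ' j ≤ σ' i then (1 : ℝ) else 0)) := by
      rw [← hcount τ i, ← hcount σ' i]; simp [hu_def]
    rw [h1, ← Finset.sum_sub_distrib]
    apply Finset.sum_congr rfl
    intro j _
    by_cases h1 : τ j ≤ τ i <;> by_cases h2 : σ' j ≤ σ' i <;>
      simp [h1, h2, not_le.mp, not_lt.mpr, le_of_lt]
  calc ∑ i, u i ^ 2 = ∑ i, ∑ j,
      ((if τ j ≤ τ i ∧ σ' i < σ' j then u i else 0)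
        - (if σ' j ≤ σ' i ∧ τ i < τ j then u i else 0)) := by
        apply Finset.sum_congr rfl
        intro i _
        rw [sq, hu i, Finset.mul_sum]
        apply Finset.sum_congr rfl
        intro j _
        by_cases h1 : τ j ≤ τ i ∧ σ' i < σ' j <;> by_cases h2 : σ' j ≤ σ' i ∧ τ i < τ j <;>
          simp [h1, h2] <;> ring
    _ = (∑ i, ∑ j, (if τ j ≤ τ i ∧ σ' i < σ' j then u i else 0))
        - ∑ i, ∑ j, (if σ' j ≤ σ' i ∧ τ i < τ j then u i else 0) := by
        rw [← Finset.sum_sub_distrib]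
        exact Finset.sum_congr rfl fun i _ => Finset.sum_sub_distrib _ _
    _ = (∑ i, ∑ j, (if τ j ≤ τ i ∧ σ' i < σ' j then u i else 0))
        - ∑ i, ∑ j, (if σ' i ≤ σ' j ∧ τ j < τ i then u j else 0) := by
        congr 1
        exact Finset.sum_comm
    _ = ∑ i, ∑ j, ((if τ j ≤ τ i ∧ σ' i < σ' j then u i else 0)
        - (if σ' i ≤ σ' j ∧ τ j < τ i then u j else 0)) := by
        rw [← Finset.sum_sub_distrib]
        exact Finset.sum_congr rfl fun i _ => (Finset.sum_sub_distrib _ _).symm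
    _ = ∑ i, ∑ j, (if τ j < τ i ∧ σ' i < σ' j then u i - u j else 0) := by
        apply Finset.sum_congr rfl; intro i _
        apply Finset.sum_congr rfl; intro j _
        by_cases hC : τ j < τ i ∧ σ' i < σ' j
        · have hA : τ j ≤ τ i ∧ σ' i < σ' j := ⟨le_of_lt hC.1, hC.2⟩
          have hB : σ' i ≤ σ' j ∧ τ j < τ i := ⟨le_of_lt hC.2, hC.1⟩
          simp [hA, hB, hC]
        · have hA : ¬(τ j ≤ τ i ∧ σ' i < σ' j) := by
            rintro ⟨h1, h2⟩
            apply hC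
            refine ⟨lt_of_le_of_ne h1 ?_, h2⟩
            intro he
            exact absurd (τ.injective he) (fun hji => absurd hji.symm (ne_of_lt h2 ∘
              congrArg σ' ∘ fun h => h) )
          have hB : ¬(σ' i ≤ σ' j ∧ τ j < τ i) := by
            rintro ⟨h1, h2⟩
            apply hC
            refine ⟨h2, lt_of_le_of_ne h1 ?_⟩
            intro he
            have := σ'.injective he
            subst this
            exact lt_irrefl _ h2
          simp [hA, hB, hC]

/-- Eq. 27 (main theoretical result): the LambdaRankIC loss `l_C` is an upper
bound on `1 − RankIC`. -/
theorem one_sub_rankIC_le_lambdaRankIC (n : ℕ) (hn : 2 ≤ n)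
    (s : Fin n → ℝ) (hs : Function.Injective s) (y : Fin n → ℝ)
    (hy : ∃ σ : Equiv.Perm (Fin n), ∀ i, y i = ((σ i : ℕ) : ℝ) + 1)
    (σ : ℝ) (hσ : 0 < σ) :
    1 - 12 * ((∑ i, (1 + ((univ.filter fun j => j ≠ i ∧ s i < s j).card : ℝ)) * y i)
            - n * (((n : ℝ) + 1) / 2) ^ 2) / (n * ((n : ℝ) ^ 2 - 1))
      ≤ 12 / (n * ((n : ℝ) ^ 2 - 1)) *
          ∑ p ∈ univ.filter fun p : Fin n × Fin n => y p.1 < y p.2,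
            |(1 + ((univ.filter fun j => j ≠ p.2 ∧ s p.2 < s j).card : ℝ))
                - (1 + ((univ.filter fun j => j ≠ p.1 ∧ s p.1 < s j).card : ℝ))| *
              (y p.2 - y p.1) *
                Real.logb 2 (1 + Real.exp (-σ * (s p.1 - s p.2))) := by
  obtain ⟨σy, hσy⟩ := hy
  -- the count function
  set c : Fin n → ℕ := fun i => (univ.filter fun j => s i < s j).card with hc_def
  have hfilt : ∀ i : Fin n,
      (univ.filter fun j => j ≠ i ∧ s i < s j) = univ.filter fun j => s i < s j := by
    intro i
    ext j
    simp only [mem_filter, mem_univ, true_and]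
    constructor
    · rintro ⟨_, h⟩; exact h
    · intro h
      refine ⟨?_, h⟩
      rintro rfl
      exact lt_irrefl _ h
  have hmono : ∀ i j, s i < s j → c j < c i := by
    intro i j hij
    apply Finset.card_lt_card
    constructor
    · intro k hk
      simp only [mem_filter, mem_univ, true_and] at *
      exact hij.trans hk
    · intro hsub
      have hj : j ∈ univ.filter fun k => s i < s k := by
        simp [hij]
      have := hsub hj
      simp at this
  have hiff : ∀ i j, s i < s j ↔ c j < c i := by
    intro i j
    constructor
    · exact hmono i j
    · intro h
      rcases lt_trichotomy (s i) (s j) with h1 | h1 | h1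
      · exact h1
      · exfalso; rw [hs h1] at h; exact lt_irrefl _ h
      · exact absurd (hmono j i h1) (by omega)
  have hclt : ∀ i, c i < n := by
    intro i
    have hss : (univ.filter fun j => s i < s j) ⊂ univ := by
      rw [Finset.ssubset_univ_iff]
      intro h
      have : i ∈ univ.filter fun j => s i < s j := by rw [h]; exact mem_univ i
      simp at this
    simpa using Finset.card_lt_card hss
  set τf : Fin n → Fin n := fun i => ⟨c i, hclt i⟩ with hτf_def
  have hτinj : Function.Injective τf := by
    intro i j h
    have hcc : c i = c j := congrArg Fin.val h
    by_contra hne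
    have hsne : s i ≠ s j := fun h' => hne (hs h')
    rcases lt_or_gt_of_ne hsne with h1 | h1
    · have := hmono i j h1; omega
    · have := hmono j i h1; omega
  have hτbij := Finite.injective_iff_bijective.mp hτinj
  set τ : Equiv.Perm (Fin n) := Equiv.ofBijective τf hτbij with hτ_def
  have hτval : ∀ i, (τ i : ℕ) = c i := fun i => rfl
  -- shorthand
  set a : Fin n → ℝ := fun i => ((τ i : ℕ) : ℝ) with ha_def
  set b : Fin n → ℝ := fun i => ((σy i : ℕ) : ℝ) with hb_def
  have hR : ∀ i : Fin n,
      (1 + ((univ.filter fun j => j ≠ i ∧ s i < s j).card : ℝ)) = a i + 1 := by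
    intro i
    rw [hfilt i]
    simp [ha_def, hτval, hc_def]
    ring
  have hY : ∀ i, y i = b i + 1 := by
    intro i; rw [hσy i]
  -- order transfers
  have hcmp : ∀ i j, s i < s j ↔ τ j < τ i := by
    intro i j
    rw [hiff i j, Fin.lt_def]
    simp [hτval]
  have hYlt : ∀ i j, (y i < y j) ↔ σy i < σy j := by
    intro i j
    rw [hσy i, hσy j, Fin.lt_def]
    constructor
    · intro h; exact_mod_cast (by linarith : ((σy i : ℕ) : ℝ) < ((σy j : ℕ) : ℝ))
    · intro h
      have : ((σy i : ℕ) : ℝ) < ((σy j : ℕ) : ℝ) := by exact_mod_cast h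
      linarith
  have hD : (0 : ℝ) < n * ((n : ℝ) ^ 2 - 1) := by
    have h2 : (2 : ℝ) ≤ n := by exact_mod_cast hn
    nlinarith
  -- sums of squares
  have hQa : ∑ i, (a i + 1) ^ 2 = (n : ℝ) * (n + 1) * (2 * n + 1) / 6 := by
    calc ∑ i, (a i + 1) ^ 2 = ∑ i, (fun k : Fin n => (((k : ℕ) : ℝ) + 1) ^ 2) (τ i) := rfl
      _ = ∑ k : Fin n, (((k : ℕ) : ℝ) + 1) ^ 2 :=
          Equiv.sum_comp τ (fun k : Fin n => (((k : ℕ) : ℝ) + 1) ^ 2)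
      _ = ∑ k ∈ range n, ((k : ℝ) + 1) ^ 2 :=
          Fin.sum_univ_eq_sum_range (fun k => ((k : ℝ) + 1) ^ 2) n
      _ = (n : ℝ) * (n + 1) * (2 * n + 1) / 6 := sumsq_aux n
  have hQb : ∑ i, (b i + 1) ^ 2 = (n : ℝ) * (n + 1) * (2 * n + 1) / 6 := by
    calc ∑ i, (b i + 1) ^ 2 = ∑ i, (fun k : Fin n => (((k : ℕ) : ℝ) + 1) ^ 2) (σy i) := rfl
      _ = ∑ k : Fin n, (((k : ℕ) : ℝ) + 1) ^ 2 :=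
          Equiv.sum_comp σy (fun k : Fin n => (((k : ℕ) : ℝ) + 1) ^ 2)
      _ = ∑ k ∈ range n, ((k : ℝ) + 1) ^ 2 :=
          Fin.sum_univ_eq_sum_range (fun k => ((k : ℝ) + 1) ^ 2) n
      _ = (n : ℝ) * (n + 1) * (2 * n + 1) / 6 := sumsq_aux n
  -- the inversion-pair lower bound sum
  set U : ℝ := ∑ i, (a i - b i) ^ 2 with hU_def
  set G : Fin n × Fin n → ℝ := fun p =>
    if τ p.2 < τ p.1 ∧ σy p.1 < σy p.2 then (a p.1 - a p.2) * (b p.2 - b p.1) else 0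
    with hG_def
  -- gaps are at least 1
  have hgap_a : ∀ i j : Fin n, τ j < τ i → a j + 1 ≤ a i := by
    intro i j h
    have : (τ j : ℕ) + 1 ≤ (τ i : ℕ) := h
    simp only [ha_def]
    exact_mod_cast this
  have hgap_b : ∀ i j : Fin n, σy i < σy j → b i + 1 ≤ b j := by
    intro i j h
    have : (σy i : ℕ) + 1 ≤ (σy j : ℕ) := h
    simp only [hb_def]
    exact_mod_cast this
  -- Step 1: U ≤ 2 * ∑ G
  have hstep1 : U ≤ 2 * ∑ p : Fin n × Fin n, G p := by
    rw [hU_def, perm_ident_aux n τ σy, ← Finset.sum_product', Finset.mul_sum]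
    rw [show (univ : Finset (Fin n × Fin n)) = univ ×ˢ univ from
      (Finset.univ_product_univ).symm]
    apply Finset.sum_le_sum
    rintro ⟨i, j⟩ _
    simp only [hG_def]
    by_cases hC : τ j < τ i ∧ σy i < σy j
    · simp only [if_pos hC]
      have h1 := hgap_a i j hC.1
      have h2 := hgap_b i j hC.2
      nlinarith
    · simp [if_neg hC]
  -- Step 2: ∑ G ≤ T (the big sum)
  set T : ℝ := ∑ p ∈ univ.filter fun p : Fin n × Fin n => y p.1 < y p.2,
      |(1 + ((univ.filter fun j => j ≠ p.2 ∧ s p.2 < s j).card : ℝ))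
          - (1 + ((univ.filter fun j => j ≠ p.1 ∧ s p.1 < s j).card : ℝ))| *
        (y p.2 - y p.1) *
          Real.logb 2 (1 + Real.exp (-σ * (s p.1 - s p.2))) with hT_def
  have hstep2 : ∑ p : Fin n × Fin n, G p ≤ T := by
    rw [hT_def, Finset.sum_filter]
    apply Finset.sum_le_sum
    rintro ⟨i, j⟩ _
    simp only [hG_def, hR, hY]
    by_cases hC : τ j < τ i ∧ σy i < σy j
    · have hylt : y i < y j := (hYlt i j).mpr hC.2
      have hylt' : b i + 1 < b j + 1 := by rw [← hY i, ← hY j]; exact hylt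
      have hslt : s i < s j := (hcmp i j).mpr hC.1
      rw [if_pos hC, if_pos hylt']
      have h1 := hgap_a i j hC.1
      have h2 := hgap_b i j hC.2
      have habs : |(a j + 1) - (a i + 1)| = a i - a j := by
        rw [show (a j + 1) - (a i + 1) = -(a i - a j) by ring, abs_neg,
          abs_of_pos (by linarith)]
      have hexp : (1 : ℝ) < Real.exp (-σ * (s i - s j)) := by
        rw [Real.one_lt_exp_iff]
        nlinarith
      have hlog : (1 : ℝ) ≤ Real.logb 2 (1 + Real.exp (-σ * (s i - s j))) := by
        calc (1 : ℝ) = Real.logb 2 2 := (Real.logb_self_eq_one one_lt_two).symm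
          _ ≤ Real.logb 2 (1 + Real.exp (-σ * (s i - s j))) :=
              Real.logb_le_logb_of_le one_lt_two (by norm_num) (by linarith)
      rw [habs]
      have hkey : (0 : ℝ) ≤ (a i - a j) * (b j - b i) *
          (Real.logb 2 (1 + Real.exp (-σ * (s i - s j))) - 1) :=
        mul_nonneg (mul_nonneg (by linarith) (by linarith)) (by linarith)
      nlinarith [hkey]
    · rw [if_neg hC]
      by_cases hy' : b i + 1 < b j + 1
      · rw [if_pos hy']
        apply mul_nonneg (mul_nonneg (abs_nonneg _) (by linarith))
        apply Real.logb_nonneg one_lt_two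
        have := Real.exp_pos (-σ * (s i - s j))
        linarith
      · rw [if_neg hy']
  -- Step 3: relate S to U and conclude
  set S : ℝ := ∑ i, (a i + 1) * (b i + 1) with hS_def
  have hUS : U = 2 * ((n : ℝ) * (n + 1) * (2 * n + 1) / 6) - 2 * S := by
    have h1 : ∀ i : Fin n, (a i - b i) ^ 2
        = (a i + 1) ^ 2 - 2 * ((a i + 1) * (b i + 1)) + (b i + 1) ^ 2 := by
      intro i; ring
    rw [hU_def]
    calc ∑ i, (a i - b i) ^ 2
        = ∑ i, ((a i + 1) ^ 2 - 2 * ((a i + 1) * (b i + 1)) + (b i + 1) ^ 2) :=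
          Finset.sum_congr rfl fun i _ => h1 i
      _ = (∑ i, (a i + 1) ^ 2) - 2 * (∑ i, (a i + 1) * (b i + 1))
            + ∑ i, (b i + 1) ^ 2 := by
          rw [Finset.sum_add_distrib, Finset.sum_sub_distrib, Finset.mul_sum]
      _ = 2 * ((n : ℝ) * (n + 1) * (2 * n + 1) / 6) - 2 * S := by
          rw [hQa, hQb, ← hS_def]; ring
  -- rewrite the goal
  have hgoalS : (∑ i, (1 + ((univ.filter fun j => j ≠ i ∧ s i < s j).card : ℝ)) * y i) = S := by
    rw [hS_def]
    apply Finset.sum_congr rfl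
    intro i _
    rw [hR i, hY i]
  rw [hgoalS]
  have hU2T : U ≤ 2 * T := le_trans hstep1 (by linarith)
  have hSval : S = (n : ℝ) * (n + 1) * (2 * n + 1) / 6 - U / 2 := by linarith
  rw [hSval]
  have hDne : (n : ℝ) * ((n : ℝ) ^ 2 - 1) ≠ 0 := ne_of_gt hD
  have hlhs : 1 - 12 * (((n : ℝ) * (n + 1) * (2 * n + 1) / 6 - U / 2)
      - n * (((n : ℝ) + 1) / 2) ^ 2) / (n * ((n : ℝ) ^ 2 - 1))
      = 6 * U / (n * ((n : ℝ) ^ 2 - 1)) := by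
    rw [eq_div_iff hDne, sub_mul, div_mul_cancel₀ _ hDne]
    ring
  rw [hlhs, div_mul_eq_mul_div]
  exact (div_le_div_iff_of_pos_right hD).mpr (by linarith)
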